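/- Let Σ be an alphabet, let A be a language over Σ recognized by a deterministic finite automaton with n_A states, and for each i with 1 ≤ i ≤ k let B_i be a language over Σ recognized by a nondeterministic finite automaton with n_i states. Then the concatenation B_1 · B_2 ⋯ B_k is contained in A if and only if the concatenation of truncations (B_1)_{|n_A·n_1} · (B_2)_{|n_A·n_2} ⋯ (B_k)_{|n_A·n_k} is contained in A. -/

import Mathlib

/-- The `m`-truncation of a language: the words of `L` of length at most `m`. -/
def Language.trunc {α : Type} (L : Language α) (m : ℕ) : Language α :=
  {w : List α | w ∈ L ∧ w.length ≤ m}

open Set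

namespace TruncAux

variable {α : Type}

/-- One-step closure of a set of NFA states. -/
def nfaF {σ : Type} (N : NFA α σ) (T : Set σ) : Set σ :=
  T ∪ {t | ∃ u ∈ T, ∃ x, t ∈ N.step u x}

lemma subset_nfaF {σ : Type} (N : NFA α σ) (T : Set σ) : T ⊆ nfaF N T :=
  Set.subset_union_left

lemma nfaF_mono {σ : Type} (N : NFA α σ) : Monotone (nfaF N) := by
  intro S T h t ht
  rcases ht with ht | ⟨u, hu, x, hx⟩
  · exact Or.inl (h ht)
  · exact Or.inr ⟨u, h hu, x, hx⟩

lemma evalFrom_subset_iterate {σ : Type} (N : NFA α σ) :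
    ∀ (w : List α) (S : Set σ), N.evalFrom S w ⊆ (nfaF N)^[w.length] S := by
  intro w
  induction w with
  | nil => intro S; simp [NFA.evalFrom]
  | cons x w ih =>
    intro S t ht
    have h1 : N.evalFrom S (x :: w) = N.evalFrom (N.stepSet S x) w := rfl
    rw [h1] at ht
    have h2 : N.stepSet S x ⊆ nfaF N S := by
      intro t ht
      rw [NFA.mem_stepSet] at ht
      rcases ht with ⟨u, hu, hx⟩
      exact Or.inr ⟨u, hu, x, hx⟩
    have := (nfaF_mono N).iterate w.length h2 (ih _ ht)
    simpa [Function.iterate_succ_apply] using this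

lemma iterate_subset_evalFrom {σ : Type} (N : NFA α σ) (S : Set σ) :
    ∀ (n : ℕ) (t : σ), t ∈ (nfaF N)^[n] S → ∃ w : List α, w.length ≤ n ∧ t ∈ N.evalFrom S w := by
  intro n
  induction n with
  | zero => intro t ht; exact ⟨[], by simp, by simpa using ht⟩
  | succ n ih =>
    intro t ht
    rw [Function.iterate_succ_apply'] at ht
    rcases ht with ht | ⟨u, hu, x, hx⟩
    · obtain ⟨w, hw, hmem⟩ := ih t ht
      exact ⟨w, hw.trans (Nat.le_succ n), hmem⟩
    · obtain ⟨w, hw, hmem⟩ := ih u hu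
      refine ⟨w ++ [x], by simpa using Nat.succ_le_succ hw, ?_⟩
      rw [NFA.evalFrom_append, NFA.evalFrom_singleton, NFA.mem_stepSet]
      exact ⟨u, hmem, hx⟩

lemma iterate_stabilizes {σ : Type} [Fintype σ] (N : NFA α σ) (S : Set σ) :
    ∀ n, (nfaF N)^[n] S ⊆ (nfaF N)^[Fintype.card σ] S := by
  set c := Fintype.card σ with hc
  have gmono : Monotone (fun n => (nfaF N)^[n] S) := by
    apply monotone_nat_of_le_succ
    intro n
    rw [Function.iterate_succ_apply']
    exact subset_nfaF N _
  have hfix : ∃ n ≤ c, (nfaF N)^[n + 1] S = (nfaF N)^[n] S := by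
    by_contra h
    push_neg at h
    have hlt : ∀ n, n ≤ c → n ≤ ((nfaF N)^[n] S).ncard := by
      intro n hn
      induction n with
      | zero => simp
      | succ m ihm =>
        have hm : m ≤ c := le_of_lt (Nat.lt_of_succ_le hn)
        have hne := h m hm
        have hsub : (nfaF N)^[m] S ⊆ (nfaF N)^[m + 1] S := gmono (Nat.le_succ m)
        have hss : (nfaF N)^[m] S ⊂ (nfaF N)^[m + 1] S :=
          ssubset_of_subset_of_ne hsub (Ne.symm hne)
        have := Set.ncard_lt_ncard hss (Set.toFinite _)
        have := ihm hm
        omega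
    have h1 := hlt c le_rfl
    have h2 : ((nfaF N)^[c] S).ncard < c + 1 := by
      have := Set.ncard_le_ncard (Set.subset_univ ((nfaF N)^[c] S)) Set.finite_univ
      rw [Set.ncard_univ, Nat.card_eq_fintype_card] at this
      omega
    have h3 := h c le_rfl
    have hsub : (nfaF N)^[c] S ⊆ (nfaF N)^[c + 1] S := gmono (Nat.le_succ c)
    have hss : (nfaF N)^[c] S ⊂ (nfaF N)^[c + 1] S := ssubset_of_subset_of_ne hsub (Ne.symm h3)
    have h4 := Set.ncard_lt_ncard hss (Set.toFinite _)
    have h5 : ((nfaF N)^[c+1] S).ncard ≤ c := by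
      have := Set.ncard_le_ncard (Set.subset_univ ((nfaF N)^[c+1] S)) Set.finite_univ
      rw [Set.ncard_univ, Nat.card_eq_fintype_card] at this
      omega
    omega
  obtain ⟨n₀, hn₀, hfixeq⟩ := hfix
  have hconst : ∀ m, n₀ ≤ m → (nfaF N)^[m] S = (nfaF N)^[n₀] S := by
    intro m hm
    induction m with
    | zero =>
      have : n₀ = 0 := Nat.le_zero.mp hm
      rw [this]
    | succ m ihm =>
      rcases Nat.lt_or_ge n₀ (m + 1) with h | h
      · have hmn : n₀ ≤ m := Nat.lt_succ_iff.mp h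
        have h2 := hfixeq
        rw [Function.iterate_succ_apply'] at h2
        rw [Function.iterate_succ_apply', ihm hmn, h2]
      · have : n₀ = m + 1 := le_antisymm hm h
        rw [this]
  intro n
  rcases le_or_gt n c with h | h
  · exact gmono h
  · rw [hconst n (hn₀.trans h.le), ← hconst c hn₀]

lemma nfa_shorten {σ : Type} [Fintype σ] (N : NFA α σ) (S : Set σ) (t : σ) (w : List α)
    (h : t ∈ N.evalFrom S w) :
    ∃ w' : List α, w'.length ≤ Fintype.card σ ∧ t ∈ N.evalFrom S w' := by
  have h1 := evalFrom_subset_iterate N w S h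
  have h2 := iterate_stabilizes N S w.length h1
  exact iterate_subset_evalFrom N S (Fintype.card σ) t h2

/-- Product of a DFA and an NFA, as an NFA. -/
def prodNFA {σA σB : Type} (M : DFA α σA) (N : NFA α σB) : NFA α (σA × σB) where
  step := fun p x => {q | q.1 = M.step p.1 x ∧ q.2 ∈ N.step p.2 x}
  start := ∅
  accept := ∅

lemma prod_stepSet {σA σB : Type} (M : DFA α σA) (N : NFA α σB) (p : σA) (T : Set σB) (x : α) :
    (prodNFA M N).stepSet ({p} ×ˢ T) x = {M.step p x} ×ˢ N.stepSet T x := by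
  ext q
  simp only [NFA.mem_stepSet, Set.mem_prod, Set.mem_singleton_iff, prodNFA]
  constructor
  · rintro ⟨u, ⟨hu1, hu2⟩, hq1, hq2⟩
    subst hu1
    exact ⟨hq1, u.2, hu2, hq2⟩
  · rintro ⟨hq1, b, hb, hq2⟩
    exact ⟨(p, b), ⟨rfl, hb⟩, hq1, hq2⟩

lemma prod_evalFrom {σA σB : Type} (M : DFA α σA) (N : NFA α σB) :
    ∀ (w : List α) (p : σA) (T : Set σB),
      (prodNFA M N).evalFrom ({p} ×ˢ T) w = {M.evalFrom p w} ×ˢ N.evalFrom T w := by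
  intro w
  induction w with
  | nil => intro p T; simp [NFA.evalFrom, DFA.evalFrom]
  | cons x w ih =>
    intro p T
    have h1 : (prodNFA M N).evalFrom ({p} ×ˢ T) (x :: w)
        = (prodNFA M N).evalFrom ((prodNFA M N).stepSet ({p} ×ˢ T) x) w := rfl
    have h2 : N.evalFrom T (x :: w) = N.evalFrom (N.stepSet T x) w := rfl
    have h3 : M.evalFrom p (x :: w) = M.evalFrom (M.step p x) w := rfl
    rw [h1, h2, h3, prod_stepSet, ih]

lemma factor_shorten {σA σB : Type} [Fintype σA] [Fintype σB]
    (M : DFA α σA) (N : NFA α σB) (s : σA) (w : List α) (hw : w ∈ N.accepts) :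
    ∃ w' : List α, w' ∈ N.accepts ∧ w'.length ≤ Fintype.card σA * Fintype.card σB ∧
      M.evalFrom s w' = M.evalFrom s w := by
  rw [NFA.mem_accepts] at hw
  obtain ⟨b, hb, hbe⟩ := hw
  have hmem : (M.evalFrom s w, b) ∈ (prodNFA M N).evalFrom ({s} ×ˢ N.start) w := by
    rw [prod_evalFrom]
    exact ⟨rfl, hbe⟩
  obtain ⟨w', hlen, hmem'⟩ := nfa_shorten (prodNFA M N) ({s} ×ˢ N.start) _ w hmem
  rw [prod_evalFrom] at hmem'
  obtain ⟨h1, h2⟩ := hmem'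
  refine ⟨w', ?_, ?_, ?_⟩
  · rw [NFA.mem_accepts]; exact ⟨b, hb, h2⟩
  · simpa [Fintype.card_prod] using hlen
  · exact h1.symm

lemma prod_mono_list {k : ℕ} (B C : Fin k → Language α) (hle : ∀ i, C i ≤ B i) :
    ∀ l : List (Fin k), (l.map C).prod ≤ (l.map B).prod := by
  intro l
  induction l with
  | nil => simp
  | cons i l ih =>
    intro w hw
    rw [List.map_cons, List.prod_cons] at hw ⊢
    replace hw := Language.mem_mul.mp hw
    obtain ⟨a, ha, b, hb, rfl⟩ := hw
    exact Language.append_mem_mul (hle i ha) (ih hb)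

lemma shorten_list {σA : Type} (M : DFA α σA) {k : ℕ} (B C : Fin k → Language α)
    (H : ∀ (i : Fin k) (s : σA) (w : List α), w ∈ B i →
      ∃ w', w' ∈ C i ∧ M.evalFrom s w' = M.evalFrom s w) :
    ∀ (l : List (Fin k)) (s : σA) (w : List α), w ∈ (l.map B).prod →
      ∃ w', w' ∈ (l.map C).prod ∧ M.evalFrom s w' = M.evalFrom s w := by
  intro l
  induction l with
  | nil =>
    intro s w hw
    simp only [List.map_nil, List.prod_nil] at hw
    exact ⟨w, by simpa using hw, rfl⟩
  | cons i l ih =>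
    intro s w hw
    rw [List.map_cons, List.prod_cons, Language.mem_mul] at hw
    obtain ⟨a, ha, b, hb, rfl⟩ := hw
    obtain ⟨a', ha', hea⟩ := H i s a ha
    obtain ⟨b', hb', heb⟩ := ih (M.evalFrom s a) b hb
    refine ⟨a' ++ b', ?_, ?_⟩
    · rw [List.map_cons, List.prod_cons]
      exact Language.append_mem_mul ha' hb'
    · rw [DFA.evalFrom_of_append, DFA.evalFrom_of_append, hea, heb]

end TruncAux

/-- Let `A` be recognized by a DFA with `n_A` states and, for `1 ≤ i ≤ k`, let `B i` be
recognized by an NFA with `n_i` states. Then `B_1 ⋯ B_k ⊆ A` iff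
`(B_1)_{|n_A n_1} ⋯ (B_k)_{|n_A n_k} ⊆ A`. -/
theorem concat_subset_iff_trunc_concat_subset
    {α : Type} {σA : Type} [Fintype σA] (M : DFA α σA) (A : Language α)
    (hA : M.accepts = A) (k : ℕ) (σB : Fin k → Type) [∀ i, Fintype (σB i)]
    (N : ∀ i, NFA α (σB i)) (B : Fin k → Language α) (hB : ∀ i, (N i).accepts = B i) :
    (List.ofFn B).prod ≤ A ↔
      (List.ofFn fun i =>
        (B i).trunc (Fintype.card σA * Fintype.card (σB i))).prod ≤ A := by
  set C : Fin k → Language α :=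
    fun i => (B i).trunc (Fintype.card σA * Fintype.card (σB i)) with hC
  have hle : ∀ i, C i ≤ B i := fun i w hw => hw.1
  constructor
  · intro h
    rw [List.ofFn_eq_map] at h ⊢
    exact le_trans (TruncAux.prod_mono_list B C hle (List.finRange k)) h
  · intro h
    rw [List.ofFn_eq_map] at h ⊢
    intro w hw
    have H : ∀ (i : Fin k) (s : σA) (w : List α), w ∈ B i →
        ∃ w', w' ∈ C i ∧ M.evalFrom s w' = M.evalFrom s w := by
      intro i s v hv
      rw [← hB i] at hv
      obtain ⟨v', hv1, hv2, hv3⟩ := TruncAux.factor_shorten M (N i) s v hv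
      exact ⟨v', ⟨by rw [← hB i]; exact hv1, hv2⟩, hv3⟩
    obtain ⟨w', hw', heq⟩ := TruncAux.shorten_list M B C H (List.finRange k) M.start w hw
    have hwA := h hw'
    rw [← hA] at hwA ⊢
    replace hwA := (DFA.mem_accepts M).mp hwA
    refine (DFA.mem_accepts M).mpr ?_
    rw [DFA.eval, ← heq]
    exact hwA
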